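/- Let q = 2^k with k a positive integer. Then X^6 permutes F_q if and only if k is odd, and this holds if and only if for every a in F_q the polynomial ((X+a)^6 + a^6)/X permutes F_q. -/

import Mathlib

open Polynomial

private lemma aux15_three_dvd_iff (k : ℕ) : (3:ℕ) ∣ 2^k - 1 ↔ Even k := by
  rw [← Nat.modEq_iff_dvd' Nat.one_le_two_pow, ← ZMod.natCast_eq_natCast_iff]
  push_cast
  constructor
  · intro h
    by_contra hodd
    rw [Nat.not_even_iff_odd] at hodd
    rw [show (2:ZMod 3) = -1 by decide, hodd.neg_one_pow] at h
    exact absurd h (by decide)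
  · intro h
    rw [show (2:ZMod 3) = -1 by decide, h.neg_one_pow]

private lemma aux15_five_not_dvd {k : ℕ} (hk : Odd k) : ¬ (5:ℕ) ∣ 2^k - 1 := by
  intro h
  rw [← Nat.modEq_iff_dvd' Nat.one_le_two_pow, ← ZMod.natCast_eq_natCast_iff] at h
  push_cast at h
  obtain ⟨m, rfl⟩ := hk
  rw [pow_add, pow_mul, show ((2:ZMod 5)^2) = -1 by decide, pow_one] at h
  rcases Nat.even_or_odd m with hm | hm
  · rw [hm.neg_one_pow, one_mul] at h; exact absurd h (by decide)
  · rw [hm.neg_one_pow, neg_one_mul] at h; exact absurd h (by decide)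

private lemma aux15_two_not_dvd {k : ℕ} (hk : 0 < k) : ¬ (2:ℕ) ∣ 2^k - 1 := by
  have hodd : Odd (2^k - 1) :=
    Nat.Even.sub_odd Nat.one_le_two_pow ((Nat.even_pow).mpr ⟨even_two, hk.ne'⟩) odd_one
  rw [Nat.odd_iff] at hodd; omega

private lemma aux15_cop6 {k : ℕ} (hk : 0 < k) (hodd : Odd k) : Nat.Coprime 6 (2^k - 1) := by
  rw [show (6:ℕ) = 2*3 from rfl, Nat.coprime_mul_iff_left]
  refine ⟨Nat.Prime.coprime_iff_not_dvd Nat.prime_two |>.mpr (aux15_two_not_dvd hk),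
    Nat.Prime.coprime_iff_not_dvd Nat.prime_three |>.mpr ?_⟩
  rw [aux15_three_dvd_iff]
  exact (Nat.not_even_iff_odd).mpr hodd

private lemma aux15_cop5 {k : ℕ} (hodd : Odd k) : Nat.Coprime 5 (2^k - 1) :=
  Nat.Prime.coprime_iff_not_dvd Nat.prime_five |>.mpr (aux15_five_not_dvd hodd)

private lemma aux15_root_one {F : Type} [Field F] [Fintype F] {n : ℕ} (hn : 0 < n)
    (hcop : Nat.Coprime n (Fintype.card F - 1)) : ∀ z : F, z ^ n = 1 → z = 1 := by
  classical
  intro z hz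
  have hzu : IsUnit z := by
    apply IsUnit.of_mul_eq_one (a := z) (z ^ (n-1))
    rw [← pow_succ', Nat.sub_add_cancel hn, hz]
  obtain ⟨u, rfl⟩ := hzu
  have hun : u ^ n = 1 := by
    apply Units.ext
    rw [Units.val_pow_eq_pow_val, hz, Units.val_one]
  have hd1 : orderOf u ∣ n := orderOf_dvd_of_pow_eq_one hun
  have hd2 : orderOf u ∣ Fintype.card F - 1 := by
    rw [← Fintype.card_units]; exact orderOf_dvd_card
  have h1 : orderOf u ∣ Nat.gcd n (Fintype.card F - 1) := Nat.dvd_gcd hd1 hd2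
  rw [Nat.Coprime] at hcop
  rw [hcop, Nat.dvd_one] at h1
  rw [orderOf_eq_one_iff.mp h1, Units.val_one]

private lemma aux15_pow_inj {F : Type} [Field F] {n : ℕ} (hn : 0 < n)
    (h1 : ∀ z : F, z ^ n = 1 → z = 1) : Function.Injective fun x : F => x ^ n := by
  intro x y h
  dsimp only at h
  by_cases hy : y = 0
  · subst hy
    rw [zero_pow hn.ne'] at h
    exact pow_eq_zero_iff hn.ne' |>.mp h
  · have hdiv : (x / y) ^ n = 1 := by
      rw [div_pow, h, div_self (pow_ne_zero _ hy)]
    exact (div_eq_one_iff_eq hy).mp (h1 _ hdiv)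

private lemma aux15_cube_root {F : Type} [Field F] [Fintype F] {k : ℕ}
    (hcard : Fintype.card F = 2^k) (hke : Even k) : ∃ z : F, z ≠ 1 ∧ z ^ 3 = 1 := by
  classical
  haveI : Fact (Nat.Prime 3) := ⟨Nat.prime_three⟩
  have h3 : 3 ∣ Fintype.card Fˣ := by
    rw [Fintype.card_units, hcard]
    exact (aux15_three_dvd_iff k).mpr hke
  obtain ⟨u, hu⟩ := exists_prime_orderOf_dvd_card 3 h3
  refine ⟨(u : F), ?_, ?_⟩
  · intro h
    have h1 : u = 1 := Units.ext (by simpa using h)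
    rw [h1, orderOf_one] at hu
    norm_num at hu
  · have h1 := pow_orderOf_eq_one u
    rw [hu] at h1
    calc (u:F)^3 = ((u^3 : Fˣ) : F) := by rw [Units.val_pow_eq_pow_val]
      _ = 1 := by rw [h1, Units.val_one]

private lemma aux15_g_inj {F : Type} [Field F] (h2 : (2:F) = 0)
    (h3 : ∀ z : F, z ^ 3 = 1 → z = 1) :
    Function.Injective fun t : F => t^5 + t^3 + t := by
  intro t s hg
  dsimp only at hg
  by_contra hne
  have hw : t + s ≠ 0 := by
    intro h
    apply hne
    have hts : t - s = 0 := by linear_combination h - s * h2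
    exact sub_eq_zero.mp hts
  have hH : (t+s)^4 + (t*s)*(t+s)^2 + (t*s)^2 + (t+s)^2 + (t*s) + 1 = 0 := by
    have hwH : (t+s) * ((t+s)^4 + (t*s)*(t+s)^2 + (t*s)^2 + (t+s)^2 + (t*s) + 1) = 0 := by
      linear_combination hg + (s + s^3 + s^5 + 2*t*s^2 + 3*t*s^4 + 2*t^2*s + 7*t^2*s^3
        + 7*t^3*s^2 + 3*t^4*s) * h2
    rcases mul_eq_zero.mp hwH with h | h
    · exact absurd h hw
    · exact h
  have hz : ∃ z : F, z^2 + z + 1 = 0 := by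
    by_cases hw1 : t + s = 1
    · have hs : s = 1 + t := by linear_combination hw1 - t * h2
      subst hs
      refine ⟨t, ?_⟩
      have hsq : (t^2 + t + 1)^2 = 0 := by
        linear_combination hH + (-1 - 6*t - 16*t^2 - 20*t^3 - 10*t^4) * h2
      exact pow_eq_zero_iff (two_ne_zero) |>.mp hsq
    · have hw1' : t + s + 1 ≠ 0 := by
        intro h
        apply hw1
        linear_combination h - h2
      set e := (t + s + 1)⁻¹ with he_def
      have he : (t + s + 1) * e = 1 := mul_inv_cancel₀ hw1'
      have key : (t*s+1)^2 + (t*s+1)*(t+s+1)^2 + (t+s+1)^4 = 0 := by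
        linear_combination hH + (1 + t*s + 3*(t+s) + (t+s)*(t*s) + 3*(t+s)^2
          + 2*(t+s)^3) * h2
      refine ⟨(t*s + 1) * e^2, ?_⟩
      linear_combination e^4 * key
        + ((t*s+1)*e^2*((t+s+1)*e+1) + (((t+s+1)*e)^2+1)*((t+s+1)*e+1)) * he
        + (1 + e^2 + e^2*(t*s) - 2*e^4 - e^4*(t*s) - 6*e^4*(t+s) - 2*e^4*(t+s)*(t*s)
          - 7*e^4*(t+s)^2 - e^4*(t+s)^2*(t*s) - 4*e^4*(t+s)^3 - e^4*(t+s)^4) * h2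
  obtain ⟨z, hzq⟩ := hz
  have hz3 : z ^ 3 = 1 := by linear_combination (z - 1) * hzq
  rw [h3 z hz3] at hzq
  have hone : (1:F) = 0 := by linear_combination hzq - h2
  exact one_ne_zero hone

private lemma aux15_poly_div {F : Type} [Field F] (h2 : (2:F) = 0) (a : F) :
    (((X + C a)^6 + C (a^6) : F[X]) / X) = X^5 + C (a^2) * X^3 + C (a^4) * X := by
  have h2' : (2 : F[X]) = 0 := by
    have hC : (2 : F[X]) = C (2:F) := by rw [map_ofNat]
    rw [hC, h2, map_zero]
  have key : ((X + C a)^6 + C (a^6) : F[X]) = X * (X^5 + C (a^2) * X^3 + C (a^4) * X) := by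
    simp only [map_pow]
    linear_combination (3*(C a)*X^5 + 7*(C a)^2*X^4 + 10*(C a)^3*X^3 + 7*(C a)^4*X^2
      + 3*(C a)^5*X + (C a)^6) * h2'
  rw [key, mul_div_cancel_left₀ _ (X_ne_zero (R := F))]

theorem statement15 (F : Type) [Field F] [Fintype F] (k : ℕ) (hk : 0 < k)
    (hcard : Fintype.card F = 2 ^ k) :
    (Function.Bijective (fun x : F => x ^ 6) ↔ Odd k) ∧
    (Odd k ↔ ∀ a : F, Function.Bijective fun x : F =>
        (((Polynomial.X + Polynomial.C a) ^ 6 + Polynomial.C (a ^ 6)) /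
            Polynomial.X).eval x) := by
  have h2 : (2:F) = 0 := by
    have hc := FiniteField.cast_card_eq_zero F
    rw [hcard] at hc
    push_cast at hc
    exact pow_eq_zero_iff hk.ne' |>.mp hc
  constructor
  · constructor
    · intro hbij
      by_contra hnot
      rw [Nat.not_odd_iff_even] at hnot
      obtain ⟨z, hz1, hz3⟩ := aux15_cube_root hcard hnot
      apply hz1
      apply hbij.injective
      show z ^ 6 = (1:F) ^ 6
      rw [one_pow, show (6:ℕ) = 3*2 from rfl, pow_mul, hz3, one_pow]
    · intro hodd
      apply Finite.injective_iff_bijective.mp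
      apply aux15_pow_inj (by norm_num)
      apply aux15_root_one (by norm_num)
      rw [hcard]
      exact aux15_cop6 hk hodd
  · have h3 : Odd k → ∀ z : F, z ^ 3 = 1 → z = 1 := by
      intro hodd
      apply aux15_root_one (by norm_num)
      rw [hcard]
      exact Nat.Coprime.coprime_dvd_left ⟨2, rfl⟩ (aux15_cop6 hk hodd)
    constructor
    · intro hodd a
      apply Finite.injective_iff_bijective.mp
      simp only [aux15_poly_div h2 a, eval_add, eval_mul, eval_pow, eval_C, eval_X]
      by_cases ha : a = 0
      · subst ha
        have hfun : (fun x : F => x^5 + 0^2*x^3 + 0^4*x) = fun x : F => x ^ 5 := by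
          funext x; ring
        rw [hfun]
        apply aux15_pow_inj (by norm_num)
        apply aux15_root_one (by norm_num)
        rw [hcard]
        exact aux15_cop5 hodd
      · intro u v huv
        dsimp only at huv
        have hkey : ∀ x : F, x^5 + a^2*x^3 + a^4*x
            = a^5 * ((a⁻¹*x)^5 + (a⁻¹*x)^3 + (a⁻¹*x)) := by
          intro x; field_simp
        rw [hkey u, hkey v] at huv
        have h1 := mul_left_cancel₀ (pow_ne_zero 5 ha) huv
        have h2' := aux15_g_inj h2 (h3 hodd) h1
        exact mul_left_cancel₀ (inv_ne_zero ha) h2'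
    · intro hall
      by_contra hnot
      rw [Nat.not_odd_iff_even] at hnot
      obtain ⟨z, hz1, hz3⟩ := aux15_cube_root hcard hnot
      have hz0 : z ≠ 0 := by
        intro h; rw [h, zero_pow (by norm_num)] at hz3; exact one_ne_zero hz3.symm
      have hzq : z^2 + z + 1 = 0 := by
        have hfac : (z - 1) * (z^2 + z + 1) = 0 := by linear_combination hz3
        rcases mul_eq_zero.mp hfac with h | h
        · exact absurd (sub_eq_zero.mp h) hz1
        · exact h
      have hbij := hall 1
      simp only [aux15_poly_div h2 1, eval_add, eval_mul, eval_pow, eval_C, eval_X] at hbij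
      apply hz0
      apply hbij.injective
      show z^5 + 1^2*z^3 + 1^4*z = 0^5 + 1^2*0^3 + 1^4*0
      have : z^5 + z^3 + z = 0 := by linear_combination (z^3 - z^2 + z) * hzq
      linear_combination this
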